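/- Suppose there exist constants c > 0 and ε, γ ∈ (0,1) such that the restriction of Λ to [0,ε] is absolutely continuous with density at least c x^{-γ} on [0,ε]. Then there is a constant C(c,ε,γ) > 0 such that for all n ≥ 2, λ_n ≥ C(c,ε,γ) n^{1+γ}, and consequently Σ_{b=m+1}^{∞} 1/λ_b ≤ 1/(γ C(c,ε,γ) m^{γ}) for all m ≥ 1. -/

import Mathlib

open MeasureTheory

/-- The coalescence rate `λ_{b,k} = ∫_{[0,1]} x^{k-2}(1-x)^{b-k} Λ(dx)`. -/
noncomputable def coalRate (Λ : Measure ℝ) (b k : ℕ) : ℝ :=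
  ∫ x in Set.Icc (0:ℝ) 1, x ^ (k - 2) * (1 - x) ^ (b - k) ∂Λ

/-- The total coalescence rate `λ_n = Σ_{k=2}^n C(n,k) λ_{n,k}`. -/
noncomputable def totalRate (Λ : Measure ℝ) (n : ℕ) : ℝ :=
  ∑ k ∈ Finset.Icc 2 n, (n.choose k : ℝ) * coalRate Λ n k

/-- Bernoulli-type step: `γ (a+1)^{-(1+γ)} ≤ a^{-γ} - (a+1)^{-γ}` for `a ≥ 1`. -/
lemma keyA_aux {γ : ℝ} (hγ0 : 0 < γ) (hγ1 : γ < 1) {a : ℝ} (ha : 1 ≤ a) :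
    γ * (a + 1) ^ (-(1 + γ)) ≤ a ^ (-γ) - (a + 1) ^ (-γ) := by
  have ha0 : (0:ℝ) < a := lt_of_lt_of_le one_pos ha
  have ha1 : (0:ℝ) < a + 1 := by linarith
  set t : ℝ := a / (a + 1) with ht_def
  have ht0 : 0 < t := div_pos ha0 ha1
  have ht1 : t < 1 := (div_lt_one ha1).2 (by linarith)
  have h1t : 1 - t = 1 / (a + 1) := by
    rw [ht_def]; field_simp; ring
  -- Bernoulli via weighted AM-GM: t^γ ≤ γ t + (1-γ)
  have hb : t ^ γ ≤ 1 - γ * (1 - t) := by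
    have h := Real.geom_mean_le_arith_mean2_weighted (w₁ := γ) (w₂ := 1 - γ) (p₁ := t)
      (p₂ := 1) hγ0.le (by linarith) ht0.le zero_le_one (by ring)
    rw [Real.one_rpow, mul_one] at h
    have heq : γ * t + (1 - γ) * 1 = 1 - γ * (1 - t) := by ring
    linarith
  have htγpos : 0 < t ^ γ := Real.rpow_pos_of_pos ht0 γ
  have hx0 : 0 ≤ γ * (1 - t) := by nlinarith
  have hmul : (1 + γ * (1 - t)) * t ^ γ ≤ 1 := by
    nlinarith [mul_le_mul_of_nonneg_left hb (by linarith : (0:ℝ) ≤ 1 + γ * (1 - t)),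
      sq_nonneg (γ * (1 - t))]
  have h2 : 1 + γ * (1 - t) ≤ (t ^ γ)⁻¹ := by
    rw [← one_div]
    exact (le_div_iff₀ htγpos).2 hmul
  have hinv : (t ^ γ)⁻¹ = t ^ (-γ) := by
    rw [Real.rpow_neg ht0.le]
  have htγ : t ^ (-γ) = a ^ (-γ) / (a + 1) ^ (-γ) := Real.div_rpow ha0.le ha1.le _
  have hB : 0 < (a + 1) ^ (-γ) := Real.rpow_pos_of_pos ha1 _
  have harw : a ^ (-γ) = (a + 1) ^ (-γ) * t ^ (-γ) := by
    rw [htγ]; field_simp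
  have hsplit : (a + 1) ^ (-(1 + γ)) = (a + 1) ^ (-γ) * (a + 1)⁻¹ := by
    rw [show -(1 + γ) = -γ + (-1) by ring, Real.rpow_add ha1, Real.rpow_neg_one]
  rw [harw, hsplit]
  have h3 : 1 + γ * (1 - t) ≤ t ^ (-γ) := by rw [← hinv]; exact h2
  have h4 : γ * (1 - t) = γ * (a + 1)⁻¹ := by rw [h1t]; ring
  nlinarith [mul_le_mul_of_nonneg_left h3 hB.le]

set_option maxHeartbeats 2000000 in
/-- If `Λ` has the `(c,ε,γ)`-property, i.e. `Λ(dx) ≥ c x^{-γ} dx` on `[0,ε]`, then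
there is a constant `C = C(c,ε,γ) > 0` such that `λ_n ≥ C n^{1+γ}` for all `n ≥ 2`, and
consequently `Σ_{b=m+1}^∞ 1/λ_b ≤ 1/(γ C m^γ)` for all `m ≥ 1`. -/
theorem cEpsGamma_property_bound (Λ : Measure ℝ) [IsFiniteMeasure Λ]
    (c ε γ : ℝ) (hc : 0 < c) (hε : ε ∈ Set.Ioo (0:ℝ) 1) (hγ : γ ∈ Set.Ioo (0:ℝ) 1)
    (hdens : ∀ s : Set ℝ, MeasurableSet s → s ⊆ Set.Icc 0 ε →
      ENNReal.ofReal (∫ x in s, c * x ^ (-γ)) ≤ Λ s) :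
    ∃ C : ℝ, 0 < C ∧
      (∀ n : ℕ, 2 ≤ n → C * (n : ℝ) ^ ((1 : ℝ) + γ) ≤ totalRate Λ n) ∧
      (∀ m : ℕ, 1 ≤ m →
        ∑' b : ℕ, 1 / totalRate Λ (m + 1 + b) ≤ 1 / (γ * C * (m : ℝ) ^ γ)) := by
  obtain ⟨hε0, hε1⟩ := hε
  obtain ⟨hγ0, hγ1⟩ := hγ
  set C : ℝ := c * ε ^ (1 - γ) * (1 - ε) / (4 * (1 - γ)) with hC_def
  have hCpos : 0 < C := by
    apply div_pos
    · exact mul_pos (mul_pos hc (Real.rpow_pos_of_pos hε0 _)) (by linarith)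
    · linarith
  have main : ∀ n : ℕ, 2 ≤ n → C * (n : ℝ) ^ ((1 : ℝ) + γ) ≤ totalRate Λ n := by
    intro n hn
    have hn0 : (0:ℝ) < n := by positivity
    have hn2 : (2:ℝ) ≤ n := by exact_mod_cast hn
    set a : ℝ := ε / n with ha_def
    have ha0 : 0 < a := div_pos hε0 hn0
    have haε : a ≤ ε := by
      rw [ha_def, div_le_iff₀ hn0]
      nlinarith
    have ha1 : a < 1 := lt_of_le_of_lt haε hε1
    -- measure lower bound on [0, a]
    have hint_eq : ∫ x in Set.Icc (0:ℝ) a, c * x ^ (-γ) = c * (a ^ (1 - γ) / (1 - γ)) := by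
      rw [MeasureTheory.integral_Icc_eq_integral_Ioc,
        ← intervalIntegral.integral_of_le ha0.le, intervalIntegral.integral_const_mul,
        integral_rpow (Or.inl (by linarith : (-1:ℝ) < -γ))]
      rw [show -γ + 1 = 1 - γ by ring, Real.zero_rpow (by linarith : (1:ℝ) - γ ≠ 0)]
      ring
    have hmeas : ENNReal.ofReal (c * (a ^ (1 - γ) / (1 - γ))) ≤ Λ (Set.Icc 0 a) := by
      rw [← hint_eq]
      exact hdens _ measurableSet_Icc (Set.Icc_subset_Icc le_rfl haε)
    have hfin : Λ (Set.Icc (0:ℝ) a) ≠ ⊤ := measure_ne_top Λ _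
    have hA : c * (a ^ (1 - γ) / (1 - γ)) ≤ (Λ (Set.Icc (0:ℝ) a)).toReal :=
      (ENNReal.ofReal_le_iff_le_toReal hfin).1 hmeas
    set A : ℝ := (Λ (Set.Icc (0:ℝ) a)).toReal with hA_def
    -- pointwise bound on [0,a]
    have hpt : ∀ x ∈ Set.Icc (0:ℝ) a, 1 - ε ≤ (1 - x) ^ (n - 2) := by
      intro x hx
      obtain ⟨hx0, hxa⟩ := hx
      have hber : 1 + (n - 2 : ℕ) * (-x) ≤ (1 + (-x)) ^ (n - 2) :=
        one_add_mul_le_pow (by linarith) _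
      have hcast : ((n - 2 : ℕ) : ℝ) = (n : ℝ) - 2 := by
        push_cast [Nat.cast_sub hn]; ring
      have hxb : ((n:ℝ) - 2) * x ≤ ε := by
        have hxa' : x ≤ ε / n := hxa
        have h1 : ((n:ℝ) - 2) * x ≤ (n:ℝ) * x := by nlinarith
        have h2 : (n:ℝ) * x ≤ (n:ℝ) * (ε / n) := by nlinarith
        have h3 : (n:ℝ) * (ε / n) = ε := by field_simp
        linarith
      calc 1 - ε ≤ 1 + ((n - 2 : ℕ) : ℝ) * (-x) := by rw [hcast]; nlinarith
        _ ≤ (1 + (-x)) ^ (n - 2) := hber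
        _ = (1 - x) ^ (n - 2) := by ring_nf
    -- integrability
    have hcont : ContinuousOn (fun x : ℝ => (1 - x) ^ (n - 2)) (Set.Icc 0 1) :=
      (Continuous.pow (by continuity) _).continuousOn
    have hint1 : IntegrableOn (fun x : ℝ => (1 - x) ^ (n - 2)) (Set.Icc (0:ℝ) 1) Λ :=
      hcont.integrableOn_compact isCompact_Icc
    have hsub : Set.Icc (0:ℝ) a ⊆ Set.Icc 0 1 := Set.Icc_subset_Icc le_rfl ha1.le
    have hinta : IntegrableOn (fun x : ℝ => (1 - x) ^ (n - 2)) (Set.Icc (0:ℝ) a) Λ :=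
      hint1.mono_set hsub
    have step1 : (1 - ε) * A ≤ ∫ x in Set.Icc (0:ℝ) a, (1 - x) ^ (n - 2) ∂Λ := by
      have hmono := setIntegral_mono_on (μ := Λ) (f := fun _ : ℝ => (1 - ε))
        (g := fun x : ℝ => (1 - x) ^ (n - 2))
        (integrableOn_const (measure_ne_top Λ _)) hinta
        measurableSet_Icc hpt
      calc (1 - ε) * A = ∫ _x in Set.Icc (0:ℝ) a, (1 - ε) ∂Λ := by
            rw [setIntegral_const, smul_eq_mul, measureReal_def, ← hA_def]; ring
        _ ≤ _ := hmono
    have step2 : ∫ x in Set.Icc (0:ℝ) a, (1 - x) ^ (n - 2) ∂Λ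
        ≤ ∫ x in Set.Icc (0:ℝ) 1, (1 - x) ^ (n - 2) ∂Λ := by
      refine setIntegral_mono_set hint1 ?_ (HasSubset.Subset.eventuallyLE hsub)
      filter_upwards [ae_restrict_mem measurableSet_Icc] with x hx
      have h1 : x ≤ 1 := hx.2
      have : (0:ℝ) ≤ 1 - x := by linarith
      positivity
    have hcoal2 : coalRate Λ n 2 = ∫ x in Set.Icc (0:ℝ) 1, (1 - x) ^ (n - 2) ∂Λ := by
      simp [coalRate]
    -- total rate at least the k = 2 term
    have hterm : (n.choose 2 : ℝ) * coalRate Λ n 2 ≤ totalRate Λ n := by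
      apply Finset.single_le_sum (f := fun k => (n.choose k : ℝ) * coalRate Λ n k)
      · intro k _
        apply mul_nonneg (by positivity)
        apply setIntegral_nonneg measurableSet_Icc
        intro x hx
        exact mul_nonneg (pow_nonneg hx.1 _) (pow_nonneg (by linarith [hx.2]) _)
      · simp [Finset.mem_Icc, hn]
    have hchoose : ((n:ℝ)^2 / 4) ≤ (n.choose 2 : ℝ) := by
      rw [Nat.cast_choose_two]
      nlinarith
    -- rpow algebra
    have hEP : a ^ (1 - γ) = ε ^ (1 - γ) * (n:ℝ) ^ (γ - 1) := by
      rw [ha_def, Real.div_rpow hε0.le hn0.le,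
        show γ - 1 = -(1 - γ) by ring, Real.rpow_neg hn0.le]
      ring
    have hnp : (n:ℝ) ^ ((1:ℝ) + γ) = (n:ℝ) ^ 2 * (n:ℝ) ^ (γ - 1) := by
      rw [show (1:ℝ) + γ = 2 + (γ - 1) by ring, Real.rpow_add hn0]
      norm_num
    have key : C * (n:ℝ) ^ ((1:ℝ) + γ)
        ≤ (n.choose 2 : ℝ) * ((1 - ε) * (c * (a ^ (1 - γ) / (1 - γ)))) := by
      have hC2 : C = (1 - ε) / 4 * (c * ε ^ (1 - γ) / (1 - γ)) := by
        rw [hC_def, mul_comm (4:ℝ) (1 - γ), ← div_div]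
        ring
      have heq : C * (n:ℝ) ^ ((1:ℝ) + γ)
          = ((n:ℝ)^2 / 4) * ((1 - ε) * (c * (a ^ (1 - γ) / (1 - γ)))) := by
        rw [hnp, hEP, hC2]
        ring
      rw [heq]
      apply mul_le_mul_of_nonneg_right hchoose
      have hap : 0 < a ^ (1 - γ) := Real.rpow_pos_of_pos ha0 _
      have h1γ : 0 < 1 - γ := by linarith
      have h1ε : 0 < 1 - ε := by linarith
      exact mul_nonneg h1ε.le (mul_nonneg hc.le (div_nonneg hap.le h1γ.le))
    calc C * (n:ℝ) ^ ((1:ℝ) + γ)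
        ≤ (n.choose 2 : ℝ) * ((1 - ε) * (c * (a ^ (1 - γ) / (1 - γ)))) := key
      _ ≤ (n.choose 2 : ℝ) * ((1 - ε) * A) := by
          apply mul_le_mul_of_nonneg_left _ (Nat.cast_nonneg _)
          exact mul_le_mul_of_nonneg_left hA (by linarith)
      _ ≤ (n.choose 2 : ℝ) * coalRate Λ n 2 := by
          apply mul_le_mul_of_nonneg_left _ (Nat.cast_nonneg _)
          rw [hcoal2]; exact le_trans step1 step2
      _ ≤ totalRate Λ n := hterm
  refine ⟨C, hCpos, main, ?_⟩
  -- tail sum bound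
  intro m hm
  have hm1 : (1:ℝ) ≤ m := by exact_mod_cast hm
  have hmpos : (0:ℝ) < m := by linarith
  have hmγ : 0 < (m:ℝ) ^ γ := Real.rpow_pos_of_pos hmpos _
  have hcastpos : ∀ b : ℕ, (0:ℝ) < ((m + 1 + b : ℕ) : ℝ) := by
    intro b
    have : 0 < m + 1 + b := by omega
    exact_mod_cast this
  have hbound : ∀ b : ℕ, 1 / totalRate Λ (m + 1 + b)
      ≤ C⁻¹ * ((m + 1 + b : ℕ) : ℝ) ^ (-(1 + γ)) := by
    intro b
    have h2 : 2 ≤ m + 1 + b := by omega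
    have hr : ((m + 1 + b : ℕ):ℝ) ^ (-(1 + γ))
        = (((m + 1 + b : ℕ):ℝ) ^ ((1:ℝ) + γ))⁻¹ := by
      rw [Real.rpow_neg (hcastpos b).le]
    rw [hr, ← mul_inv, ← one_div]
    refine one_div_le_one_div_of_le ?_ (main _ h2)
    exact mul_pos hCpos (Real.rpow_pos_of_pos (hcastpos b) _)
  have hpos : ∀ b : ℕ, 0 < totalRate Λ (m + 1 + b) := by
    intro b
    have h2 : 2 ≤ m + 1 + b := by omega
    refine lt_of_lt_of_le ?_ (main _ h2)
    exact mul_pos hCpos (Real.rpow_pos_of_pos (hcastpos b) _)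
  have hsum : ∀ N : ℕ, ∑ b ∈ Finset.range N, ((m + 1 + b : ℕ) : ℝ) ^ (-(1 + γ))
      ≤ (m:ℝ) ^ (-γ) / γ := by
    intro N
    rw [le_div_iff₀ hγ0]
    have hterm : ∀ b ∈ Finset.range N, γ * ((m + 1 + b : ℕ):ℝ) ^ (-(1 + γ))
        ≤ ((m:ℝ) + b) ^ (-γ) - ((m:ℝ) + (b + 1 : ℕ)) ^ (-γ) := by
      intro b _
      have h1 : (1:ℝ) ≤ (m:ℝ) + b := by
        have : (0:ℝ) ≤ (b:ℝ) := by positivity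
        linarith
      have hk := keyA_aux hγ0 hγ1 h1
      have hc1 : ((m + 1 + b : ℕ):ℝ) = (m:ℝ) + b + 1 := by push_cast; ring
      have hc2 : ((m:ℝ) + (b + 1 : ℕ)) = (m:ℝ) + b + 1 := by push_cast; ring
      rw [hc1, hc2]
      exact hk
    calc (∑ b ∈ Finset.range N, ((m + 1 + b : ℕ) : ℝ) ^ (-(1 + γ))) * γ
        = ∑ b ∈ Finset.range N, γ * ((m + 1 + b : ℕ) : ℝ) ^ (-(1 + γ)) := by
          rw [Finset.sum_mul]; exact Finset.sum_congr rfl fun b _ => by ring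
      _ ≤ ∑ b ∈ Finset.range N,
            (((m:ℝ) + b) ^ (-γ) - ((m:ℝ) + (b + 1 : ℕ)) ^ (-γ)) :=
          Finset.sum_le_sum hterm
      _ = ((m:ℝ) + (0:ℕ)) ^ (-γ) - ((m:ℝ) + (N:ℕ)) ^ (-γ) :=
          Finset.sum_range_sub' (fun i : ℕ => ((m:ℝ) + i) ^ (-γ)) N
      _ ≤ (m:ℝ) ^ (-γ) := by
          have h0 : ((m:ℝ) + ((0:ℕ):ℝ)) = (m:ℝ) := by norm_num
          rw [h0]
          have : (0:ℝ) ≤ ((m:ℝ) + (N:ℕ)) ^ (-γ) :=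
            Real.rpow_nonneg (by positivity) _
          linarith
  refine Real.tsum_le_of_sum_range_le (fun b => ?_) (fun N => ?_)
  · exact (one_div_pos.2 (hpos b)).le
  · calc ∑ b ∈ Finset.range N, 1 / totalRate Λ (m + 1 + b)
        ≤ ∑ b ∈ Finset.range N, C⁻¹ * ((m + 1 + b : ℕ) : ℝ) ^ (-(1 + γ)) :=
          Finset.sum_le_sum fun b _ => hbound b
      _ = C⁻¹ * ∑ b ∈ Finset.range N, ((m + 1 + b : ℕ) : ℝ) ^ (-(1 + γ)) := by
          rw [Finset.mul_sum]
      _ ≤ C⁻¹ * ((m:ℝ) ^ (-γ) / γ) := by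
          exact mul_le_mul_of_nonneg_left (hsum N) (inv_nonneg.2 hCpos.le)
      _ = 1 / (γ * C * (m:ℝ) ^ γ) := by
          rw [Real.rpow_neg hmpos.le]
          field_simp
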